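/- Let 𝔽_q be a finite field, n ≥ 1, and F : 𝔽_q^n → 𝔽_q^n a bijection. Let W be an 𝔽_q-subspace of the space of functions 𝔽_q^n → 𝔽_q such that φ ∘ F ∈ W for every φ ∈ W, and such that every coordinate function χ_i belongs to W. Then for each i, the i-th coordinate function of the inverse map, χ_i ∘ F^{-1}, belongs to W. -/

import Mathlib

/-- If `F : 𝔽_q^n → 𝔽_q^n` is a bijection and `W` is a subspace of functions invariant
under `φ ↦ φ ∘ F` containing all coordinate functions, then each coordinate function of
the inverse map, `χ_i ∘ F⁻¹`, also belongs to `W`. -/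
theorem stmt_8 {K : Type*} [Field K] [Fintype K] {n : ℕ} (hn : 1 ≤ n)
    (F : (Fin n → K) → (Fin n → K)) (hF : Function.Bijective F)
    (W : Submodule K ((Fin n → K) → K))
    (hinv : ∀ φ ∈ W, φ ∘ F ∈ W)
    (hχ : ∀ i : Fin n, (fun x : Fin n → K => x i) ∈ W) :
    ∀ i : Fin n, (fun x : Fin n → K => x i) ∘ Function.invFun F ∈ W := by
  intro i
  -- W is closed under composing with iterates of F
  have hiter : ∀ (k : ℕ) (φ : (Fin n → K) → K), φ ∈ W → φ ∘ F^[k] ∈ W := by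
    intro k
    induction k with
    | zero => intro φ h; simpa using h
    | succ k ih =>
      intro φ h
      have := hinv _ (ih φ h)
      simpa [Function.iterate_succ', Function.comp_assoc] using this
  -- F as a permutation
  set e : Equiv.Perm (Fin n → K) := Equiv.ofBijective F hF with he
  have hcoe : ⇑e = F := rfl
  set m := orderOf e with hm
  have hmpos : 0 < m := orderOf_pos e
  have hepow : e ^ m = 1 := pow_orderOf_eq_one e
  have hinv_eq : e⁻¹ = e ^ (m - 1) := by
    apply inv_eq_of_mul_eq_one_right
    rw [← pow_succ']
    rw [Nat.sub_add_cancel hmpos]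
    exact hepow
  have hinvFun : Function.invFun F = ⇑(e ^ (m - 1)) := by
    funext x
    obtain ⟨y, rfl⟩ := hF.surjective x
    rw [Function.leftInverse_invFun hF.injective y]
    rw [← hinv_eq]
    have : F y = e y := rfl
    rw [this, Equiv.Perm.inv_def, Equiv.symm_apply_apply]
  rw [hinvFun, Equiv.Perm.coe_pow, hcoe]
  exact hiter (m - 1) _ (hχ i)
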